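/- Let R be a commutative ring, S a multiplicative subset of R, J an ideal of R with J ∩ S ≠ ∅, and I an S-primary ideal of R. Then the product ideal J*I is an S-primary ideal of R (in particular (J*I) ∩ S = ∅). -/

import Mathlib

/-- If `J ∩ S ≠ ∅` and `I` is an `S`-primary ideal of `R`, then `J*I` is an `S`-primary
ideal of `R`. -/
theorem stmt_16 {R : Type*} [CommRing R] (S : Submonoid R) (I J : Ideal R)
    (hJS : (J : Set R) ∩ (S : Set R) ≠ ∅)
    (hdisj : (I : Set R) ∩ (S : Set R) = ∅)
    (hSprimary : ∃ s ∈ S, ∀ x y : R, x * y ∈ I → s * x ∈ I ∨ s * y ∈ I.radical) :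
    ((J * I : Ideal R) : Set R) ∩ (S : Set R) = ∅ ∧
      ∃ s ∈ S, ∀ x y : R, x * y ∈ J * I →
        s * x ∈ J * I ∨ s * y ∈ (J * I).radical := by
  obtain ⟨t, htJ, htS⟩ := Set.nonempty_iff_ne_empty.2 hJS
  obtain ⟨s, hsS, hs⟩ := hSprimary
  have hle : J * I ≤ I := Ideal.mul_le_right
  constructor
  · apply Set.eq_empty_of_forall_notMem
    intro x hx
    exact Set.eq_empty_iff_forall_notMem.1 hdisj x ⟨hle hx.1, hx.2⟩
  · refine ⟨t * s, S.mul_mem htS hsS, fun x y hxy => ?_⟩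
    rcases hs x y (hle hxy) with h | h
    · left
      have : t * s * x = t * (s * x) := by ring
      rw [this]
      exact Ideal.mul_mem_mul htJ h
    · right
      obtain ⟨n, hn⟩ := h
      rcases Nat.eq_zero_or_pos n with rfl | hnpos
      · exfalso
        exact Set.eq_empty_iff_forall_notMem.1 hdisj 1
          ⟨by simpa using hn, S.one_mem⟩
      · refine ⟨n, ?_⟩
        have : (t * s * y) ^ n = t ^ n * (s * y) ^ n := by ring
        rw [this]
        exact Ideal.mul_mem_mul (Ideal.pow_mem_of_mem J htJ n hnpos) hn
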